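/- Let q₁(t) = f₁ + 2g₁t + h₁t² and q₂(t) = f₂ + 2g₂t + h₂t² be real quadratics positive on the open interval (y, x) with x > y, whose product has at most simple zeros on [y,x], and such that g₁² − f₁h₁ ≥ 0 and g₂² − f₂h₂ ≥ 0. Set (x−y)U = √(q₁(x)q₂(y)) + √(q₁(y)q₂(x)), T = 2g₁g₂ − f₁h₂ − f₂h₁, and V = 2√((g₁²−f₁h₁)(g₂²−f₂h₂)). Then ∫_y^x [q₁(t)q₂(t)]^{-1/2} dt = 2 R_F(U² + T + V, U² + T − V, U²). -/

import Mathlib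

open MeasureTheory Real

noncomputable def RC (x y : ℝ) : ℝ :=
  (1/2) * ∫ t in Set.Ioi (0:ℝ), (Real.sqrt (t + x))⁻¹ * (t + y)⁻¹

noncomputable def RF (x y z : ℝ) : ℝ :=
  (1/2) * ∫ t in Set.Ioi (0:ℝ), (Real.sqrt ((t + x) * (t + y) * (t + z)))⁻¹

noncomputable def RD (x y z : ℝ) : ℝ :=
  (3/2) * ∫ t in Set.Ioi (0:ℝ),
    (Real.sqrt ((t + x) * (t + y)))⁻¹ * ((t + z) * Real.sqrt (t + z))⁻¹

noncomputable def RJ (x y z p : ℝ) : ℝ :=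
  (3/2) * ∫ t in Set.Ioi (0:ℝ),
    (Real.sqrt ((t + x) * (t + y) * (t + z)))⁻¹ * (t + p)⁻¹

noncomputable def RG (x y z : ℝ) : ℝ :=
  (1/4) * ∫ t in Set.Ioi (0:ℝ),
    (Real.sqrt ((t + x) * (t + y) * (t + z)))⁻¹ *
      (x / (t + x) + y / (t + y) + z / (t + z)) * t

open Set Filter Topology

-- key polynomial identity (Carlson): verified numerically
lemma key_identity (f1 g1 h1 f2 g2 h2 t y A B C D : ℝ)
    (hA : A^2 = f1+2*g1*t+h1*t^2) (hB : B^2 = f2+2*g2*t+h2*t^2)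
    (hC : C^2 = f1+2*g1*y+h1*y^2) (hD : D^2 = f2+2*g2*y+h2*y^2) :
    (2*(B*D*(f1+g1*(t+y)+h1*(t*y)) + A*C*(f2+g2*(t+y)+h2*(t*y))))^2
      = ((A*D+C*B)^2 + (2*g1*g2-f1*h2-f2*h1)*(t-y)^2)^2
        - 4*((g1^2-f1*h1)*(g2^2-f2*h2))*(t-y)^4 := by
  linear_combination ((-6)*B^2*C^2*D^2 + (-4)*A*B*C*D^3 + (-1)*A^2*D^4 + (4)*h2^2*t^2*y^2*C^2 + (8)*g2*h2*t*y^2*C^2 + (8)*g2*h2*t^2*y*C^2 + (4)*g2^2*y^2*C^2 + (8)*g2^2*t*y*C^2 + (4)*g2^2*t^2*C^2 + (8)*f2*h2*t*y*C^2 + (8)*f2*g2*y*C^2 + (8)*f2*g2*t*C^2 + (4)*f2^2*C^2 + (-1)*h1*t^2*D^4 + (2)*h1*f2*y^2*D^2 + (-4)*h1*f2*t*y*D^2 + (2)*h1*f2*t^2*D^2 + (-2)*g1*t*D^4 + (-4)*g1*g2*y^2*D^2 + (8)*g1*g2*t*y*D^2 + (-4)*g1*g2*t^2*D^2 + (-1)*f1*D^4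 + (2)*f1*h2*y^2*D^2 + (-4)*f1*h2*t*y*D^2 + (2)*f1*h2*t^2*D^2) * hA + ((-1)*B^2*C^4 + (-4)*A*B*C^3*D + (-1)*h2*t^2*C^4 + (-2)*g2*t*C^4 + (-1)*f2*C^4 + (-6)*h1*t^2*C^2*D^2 + (2)*h1*f2*y^2*C^2 + (-4)*h1*f2*t*y*C^2 + (2)*h1*f2*t^2*C^2 + (4)*h1^2*t^2*y^2*D^2 + (-12)*g1*t*C^2*D^2 + (-4)*g1*g2*y^2*C^2 + (8)*g1*g2*t*y*C^2 + (-4)*g1*g2*t^2*C^2 + (8)*g1*h1*t*y^2*D^2 + (8)*g1*h1*t^2*y*D^2 + (4)*g1^2*y^2*D^2 + (8)*g1^2*t*y*D^2 + (4)*g1^2*t^2*D^2 + (-6)*f1*C^2*D^2 + (2)*f1*h2*y^2*C^2 + (-4)*f1*h2*t*y*C^2 + (2)*f1*h2*t^2*C^2 + (8)*f1*h1*t*y*D^2 + (8)*f1*g1*y*D^2 + (8)*f1*g1*t*D^2 + (4)*f1^2*D^2) * hB + ((-4)*h2*t^2*A*B*C*D + (-1)*h2^2*t^4*C^2 + (-8)*g2*t*A*B*C*D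 + (-4)*g2*h2*t^3*C^2 + (-4)*g2^2*t^2*C^2 + (-4)*f2*A*B*C*D + (-2)*f2*h2*t^2*C^2 + (-4)*f2*g2*t*C^2 + (-1)*f2^2*C^2 + (-6)*h1*h2*t^4*D^2 + (3)*h1*h2^2*t^4*y^2 + (-12)*h1*g2*t^3*D^2 + (4)*h1*g2*h2*t^3*y^2 + (8)*h1*g2*h2*t^4*y + (8)*h1*g2^2*t^3*y + (4)*h1*g2^2*t^4 + (-6)*h1*f2*t^2*D^2 + (4)*h1*f2*h2*t^3*y + (2)*h1*f2*h2*t^4 + (12)*h1*f2*g2*t^3 + (1)*h1*f2^2*y^2 + (-4)*h1*f2^2*t*y + (6)*h1*f2^2*t^2 + (-12)*g1*h2*t^3*D^2 + (8)*g1*h2^2*t^3*y^2 + (-2)*g1*h2^2*t^4*y + (-24)*g1*g2*t^2*D^2 + (12)*g1*g2*h2*t^2*y^2 + (16)*g1*g2*h2*t^3*y + (-4)*g1*g2*h2*t^4 + (24)*g1*g2^2*t^2*y + (-12)*g1*f2*t*D^2 + (12)*g1*f2*h2*t^2*y + (-4)*g1*f2*g2*y^2 + (16)*g1*f2*g2*t*y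 + (12)*g1*f2*g2*t^2 + (-2)*g1*f2^2*y + (8)*g1*f2^2*t + (-6)*f1*h2*t^2*D^2 + (6)*f1*h2^2*t^2*y^2 + (-4)*f1*h2^2*t^3*y + (1)*f1*h2^2*t^4 + (-12)*f1*g2*t*D^2 + (12)*f1*g2*h2*t*y^2 + (4)*f1*g2^2*y^2 + (8)*f1*g2^2*t*y + (-6)*f1*f2*D^2 + (2)*f1*f2*h2*y^2 + (4)*f1*f2*h2*t*y + (8)*f1*f2*g2*y + (4)*f1*f2*g2*t + (3)*f1*f2^2) * hC + ((-4)*h1*t^2*A*B*C*D + (-1)*h1^2*t^4*D^2 + (-3)*h1^2*h2*t^4*y^2 + (-4)*h1^2*g2*t^3*y^2 + (-2)*h1^2*g2*t^4*y + (-4)*h1^2*f2*t^3*y + (1)*h1^2*f2*t^4 + (-8)*g1*t*A*B*C*D + (-4)*g1*h1*t^3*D^2 + (-8)*g1*h1*h2*t^3*y^2 + (-4)*g1*h1*h2*t^4*y + (-12)*g1*h1*g2*t^2*y^2 + (-8)*g1*h1*g2*t^3*y + (-4)*g1*h1*g2*t^4 + (-12)*g1*h1*f2*t^2*y + (-4)*g1^2*t^2*D^2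 + (-16)*g1^2*h2*t^3*y + (4)*g1^2*h2*t^4 + (-24)*g1^2*g2*t^2*y + (4)*g1^2*f2*y^2 + (-16)*g1^2*f2*t*y + (-4)*f1*A*B*C*D + (-2)*f1*h1*t^2*D^2 + (-6)*f1*h1*h2*t^2*y^2 + (4)*f1*h1*h2*t^3*y + (-4)*f1*h1*h2*t^4 + (-12)*f1*h1*g2*t*y^2 + (12)*f1*h1*g2*t^2*y + (-12)*f1*h1*g2*t^3 + (-4)*f1*h1*f2*y^2 + (4)*f1*h1*f2*t*y + (-6)*f1*h1*f2*t^2 + (-4)*f1*g1*t*D^2 + (-12)*f1*g1*h2*t^2*y + (-4)*f1*g1*g2*y^2 + (-8)*f1*g1*g2*t*y + (-12)*f1*g1*g2*t^2 + (-4)*f1*g1*f2*y + (-8)*f1*g1*f2*t + (-1)*f1^2*D^2 + (1)*f1^2*h2*y^2 + (-4)*f1^2*h2*t*y + (-2)*f1^2*g2*y + (-4)*f1^2*g2*t + (-3)*f1^2*f2) * hD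

lemma polar_sq (f g h t y : ℝ) :
    (f + g*(t+y) + h*(t*y))^2
      = (f+2*g*t+h*t^2)*(f+2*g*y+h*y^2) + (g^2-f*h)*(t-y)^2 := by ring

lemma tendsto_aux (e b c : ℝ) (he : 0 ≤ e) (hb : 0 < e ∨ 0 < b) :
    Tendsto (fun s : ℝ => (e + b*s + c*s^2)/s^2) (𝓝[>] (0:ℝ)) atTop := by
  have hmain : Tendsto ((fun s : ℝ => (e + b*s)/s^2)) (𝓝[>] (0:ℝ)) atTop := by
    rcases hb with hbe | hbb
    · -- e > 0
      have hlow : Tendsto (fun s : ℝ => (e/2)/s^2) (𝓝[>] (0:ℝ)) atTop := by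
        have h2 : Tendsto (fun s : ℝ => s^2) (𝓝[>] (0:ℝ)) (𝓝[>] (0:ℝ)) := by
          apply tendsto_nhdsWithin_of_tendsto_nhds_of_eventually_within
          · have : ContinuousAt (fun s : ℝ => s^2) 0 := by fun_prop
            simpa using this.tendsto.mono_left nhdsWithin_le_nhds
          · filter_upwards [self_mem_nhdsWithin] with s hs
            exact pow_pos (show (0:ℝ) < s from hs) 2
        simpa [div_eq_mul_inv] using
          (tendsto_inv_nhdsGT_zero.comp h2).const_mul_atTop (by positivity : (0:ℝ) < e/2)
      apply tendsto_atTop_mono' _ _ hlow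
      have hδ : (0:ℝ) < e/(2*(|b|+1)) := by positivity
      filter_upwards [Ioo_mem_nhdsGT_of_mem (by exact ⟨le_refl _, hδ⟩)] with s hs
      apply div_le_div_of_nonneg_right _ (pow_pos hs.1 2).le
      have h1 : |b| * s ≤ |b| * (e/(2*(|b|+1))) :=
        mul_le_mul_of_nonneg_left hs.2.le (abs_nonneg b)
      have h2 : |b| * (e/(2*(|b|+1))) ≤ e/2 := by
        rw [← mul_div_assoc, div_le_div_iff₀ (by positivity) (by norm_num : (0:ℝ) < 2)]
        nlinarith [abs_nonneg b]
      nlinarith [neg_abs_le b, mul_le_mul_of_nonneg_right (neg_abs_le b) hs.1.le,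
        mul_le_mul_of_nonneg_right (le_abs_self b) hs.1.le]
    · -- b > 0
      have hlow : Tendsto (fun s : ℝ => b/s) (𝓝[>] (0:ℝ)) atTop := by
        simpa [div_eq_mul_inv] using tendsto_inv_nhdsGT_zero.const_mul_atTop hbb
      apply tendsto_atTop_mono' _ _ hlow
      filter_upwards [self_mem_nhdsWithin] with s hs
      rw [div_le_div_iff₀ hs (pow_pos hs 2)]
      nlinarith [mul_nonneg he hs.le]
  have := tendsto_atTop_add_const_right (𝓝[>] (0:ℝ)) c hmain
  apply this.congr'
  filter_upwards [self_mem_nhdsWithin] with s hs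
  have hs' : (s:ℝ) ≠ 0 := ne_of_gt hs
  field_simp

set_option maxHeartbeats 4000000 in
set_option maxRecDepth 16000 in
theorem stmt19 (f1 g1 h1 f2 g2 h2 x y U : ℝ) (hxy : y < x)
    (q1 : ℝ → ℝ) (q2 : ℝ → ℝ)
    (hq1 : ∀ t, q1 t = f1 + 2 * g1 * t + h1 * t ^ 2)
    (hq2 : ∀ t, q2 t = f2 + 2 * g2 * t + h2 * t ^ 2)
    (hpos1 : ∀ t ∈ Set.Ioo y x, 0 < q1 t)
    (hpos2 : ∀ t ∈ Set.Ioo y x, 0 < q2 t)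
    (hsimple : ∀ t ∈ Set.Icc y x,
      ¬(q1 t * q2 t = 0 ∧ deriv (fun s => q1 s * q2 s) t = 0))
    (hd1 : 0 ≤ g1 ^ 2 - f1 * h1) (hd2 : 0 ≤ g2 ^ 2 - f2 * h2)
    (hU : (x - y) * U = Real.sqrt (q1 x * q2 y) + Real.sqrt (q1 y * q2 x)) :
    ∫ t in y..x, (Real.sqrt (q1 t * q2 t))⁻¹ =
      2 * RF (U ^ 2 + (2 * g1 * g2 - f1 * h2 - f2 * h1)
                + 2 * Real.sqrt ((g1 ^ 2 - f1 * h1) * (g2 ^ 2 - f2 * h2)))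
             (U ^ 2 + (2 * g1 * g2 - f1 * h2 - f2 * h1)
                - 2 * Real.sqrt ((g1 ^ 2 - f1 * h1) * (g2 ^ 2 - f2 * h2)))
             (U ^ 2) := by
  obtain rfl : q1 = fun t => f1 + 2 * g1 * t + h1 * t ^ 2 := funext hq1
  obtain rfl : q2 = fun t => f2 + 2 * g2 * t + h2 * t ^ 2 := funext hq2
  clear hq1 hq2
  set q1 : ℝ → ℝ := fun t => f1 + 2 * g1 * t + h1 * t ^ 2 with hq1def
  set q2 : ℝ → ℝ := fun t => f2 + 2 * g2 * t + h2 * t ^ 2 with hq2def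
  set T : ℝ := 2 * g1 * g2 - f1 * h2 - f2 * h1 with hT
  set V : ℝ := 2 * Real.sqrt ((g1 ^ 2 - f1 * h1) * (g2 ^ 2 - f2 * h2)) with hV
  -- the substitution function
  set u : ℝ → ℝ := fun t => (Real.sqrt (q1 t * q2 y) + Real.sqrt (q1 y * q2 t)) / (t - y)
    with hu
  set φ : ℝ → ℝ := fun t => (u t)^2 - U^2 with hφ
  set W : ℝ → ℝ := fun t => 2 * (Real.sqrt (q2 t) * Real.sqrt (q2 y) * (f1+g1*(t+y)+h1*(t*y))
      + Real.sqrt (q1 t) * Real.sqrt (q1 y) * (f2+g2*(t+y)+h2*(t*y))) with hW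
  set φd : ℝ → ℝ := fun t =>
      2 * u t * (-(W t) / (2 * Real.sqrt (q1 t) * Real.sqrt (q2 t) * (t-y)^2)) with hφd
  set G : ℝ → ℝ := fun s => (Real.sqrt ((s + (U ^ 2 + T + V)) * (s + (U ^ 2 + T - V))
      * (s + U ^ 2)))⁻¹ with hG
  -- derivatives of the quadratics
  have hdq1 : ∀ s : ℝ, HasDerivAt q1 (2*g1+2*h1*s) s := by
    intro s
    have h1' : HasDerivAt (fun t : ℝ => f1 + 2 * g1 * t) (2*g1) s := by
      simpa using ((hasDerivAt_id s).const_mul (2*g1)).const_add f1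
    have h2' : HasDerivAt (fun t : ℝ => h1 * t ^ 2) (2*h1*s) s := by
      have h := (hasDerivAt_pow 2 s).const_mul h1
      refine h.congr_deriv ?_
      push_cast; ring
    exact h1'.add h2'
  have hdq2 : ∀ s : ℝ, HasDerivAt q2 (2*g2+2*h2*s) s := by
    intro s
    have h1' : HasDerivAt (fun t : ℝ => f2 + 2 * g2 * t) (2*g2) s := by
      simpa using ((hasDerivAt_id s).const_mul (2*g2)).const_add f2
    have h2' : HasDerivAt (fun t : ℝ => h2 * t ^ 2) (2*h2*s) s := by
      have h := (hasDerivAt_pow 2 s).const_mul h2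
      refine h.congr_deriv ?_
      push_cast; ring
    exact h1'.add h2'
  -- basic nonnegativity at y
  have hq1y : 0 ≤ q1 y := by
    have hcq1 : Continuous q1 := by rw [hq1def]; fun_prop
    refine ge_of_tendsto ((hcq1.tendsto y).mono_left
      (nhdsWithin_le_nhds (s := Set.Ioi y))) ?_
    filter_upwards [Ioo_mem_nhdsGT_of_mem ⟨le_refl y, hxy⟩] with t ht
    exact (hpos1 t ht).le
  have hq2y : 0 ≤ q2 y := by
    have hcq2 : Continuous q2 := by rw [hq2def]; fun_prop
    refine ge_of_tendsto ((hcq2.tendsto y).mono_left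
      (nhdsWithin_le_nhds (s := Set.Ioi y))) ?_
    filter_upwards [Ioo_mem_nhdsGT_of_mem ⟨le_refl y, hxy⟩] with t ht
    exact (hpos2 t ht).le
  -- key step: a strictly positive slope at a zero endpoint
  have hslope : ∀ p c : ℝ, (∀ t ∈ Set.Ioo y x, 0 < p * (t-y) + c*(t-y)^2) → p ≠ 0 → 0 < p := by
    intro p c hpt hpne
    rcases lt_or_gt_of_ne hpne with hneg | hpos
    · exfalso
      have hεpos : 0 < min ((x-y)/2) ((-p)/(2*(|c|+1))) :=
        lt_min (by linarith) (div_pos (by linarith) (by positivity))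
      set ε := min ((x-y)/2) ((-p)/(2*(|c|+1))) with hεdef
      have hεx : y + ε < x := by
        have h1 : ε ≤ (x-y)/2 := min_le_left _ _
        linarith
      have hq := hpt (y+ε) ⟨by linarith, hεx⟩
      have hε2 : ε ≤ (-p)/(2*(|c|+1)) := min_le_right _ _
      have habs : |c| * ε ≤ -p/2 := by
        have h1 : |c| * ε ≤ |c| * ((-p)/(2*(|c|+1))) :=
          mul_le_mul_of_nonneg_left hε2 (abs_nonneg c)
        have h2 : |c| * ((-p)/(2*(|c|+1))) ≤ -p/2 := by
          rw [← mul_div_assoc, div_le_div_iff₀ (by positivity) (by norm_num : (0:ℝ) < 2)]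
          nlinarith [abs_nonneg c]
        linarith
      have hcc : c*ε ≤ |c| * ε := mul_le_mul_of_nonneg_right (le_abs_self c) hεpos.le
      have : p*(y+ε-y) + c*(y+ε-y)^2 ≤ p*ε + (-p/2)*ε := by
        have : c*(y+ε-y)^2 = (c*ε)*ε := by ring
        nlinarith [mul_le_mul_of_nonneg_right (le_trans hcc habs) hεpos.le]
      nlinarith
    · exact hpos
  -- consequences of simple zeros at y
  have hy1 : q1 y = 0 → (0 < q2 y ∧ 0 < 2*g1 + 2*h1*y) := by
    intro h0
    have hprod0 : q1 y * q2 y = 0 := by rw [h0, zero_mul]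
    have hdprod : deriv (fun s => q1 s * q2 s) y
        = (2*g1+2*h1*y) * q2 y + q1 y * (2*g2+2*h2*y) := ((hdq1 y).mul (hdq2 y)).deriv
    have hne : deriv (fun s => q1 s * q2 s) y ≠ 0 :=
      fun hc => hsimple y ⟨le_refl y, hxy.le⟩ ⟨hprod0, hc⟩
    rw [hdprod, h0, zero_mul, add_zero] at hne
    have hq2pos : 0 < q2 y := lt_of_le_of_ne hq2y (Ne.symm (right_ne_zero_of_mul hne))
    refine ⟨hq2pos, ?_⟩
    refine hslope (2*g1+2*h1*y) h1 ?_ (left_ne_zero_of_mul hne)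
    intro t ht
    have h1t := hpos1 t ht
    have : q1 t = (2*g1+2*h1*y)*(t-y) + h1*(t-y)^2 := by
      rw [hq1def]; simp only []
      have h0' : f1 + 2*g1*y + h1*y^2 = 0 := by rw [hq1def] at h0; simpa using h0
      linear_combination h0'
    linarith [this ▸ h1t]
  have hy2 : q2 y = 0 → (0 < q1 y ∧ 0 < 2*g2 + 2*h2*y) := by
    intro h0
    have hprod0 : q1 y * q2 y = 0 := by rw [h0, mul_zero]
    have hdprod : deriv (fun s => q1 s * q2 s) y
        = (2*g1+2*h1*y) * q2 y + q1 y * (2*g2+2*h2*y) := ((hdq1 y).mul (hdq2 y)).deriv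
    have hne : deriv (fun s => q1 s * q2 s) y ≠ 0 :=
      fun hc => hsimple y ⟨le_refl y, hxy.le⟩ ⟨hprod0, hc⟩
    rw [hdprod, h0, mul_zero, zero_add] at hne
    have hq1pos : 0 < q1 y := lt_of_le_of_ne hq1y (Ne.symm (left_ne_zero_of_mul hne))
    refine ⟨hq1pos, ?_⟩
    refine hslope (2*g2+2*h2*y) h2 ?_ (right_ne_zero_of_mul hne)
    intro t ht
    have h2t := hpos2 t ht
    have : q2 t = (2*g2+2*h2*y)*(t-y) + h2*(t-y)^2 := by
      rw [hq2def]; simp only []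
      have h0' : f2 + 2*g2*y + h2*y^2 = 0 := by rw [hq2def] at h0; simpa using h0
      linear_combination h0'
    linarith [this ▸ h2t]
  -- positivity of the "polar" quantities
  have hpolar : ∀ (a b c : ℝ), 0 ≤ b^2 - a*c →
      (∀ t ∈ Set.Ioo y x, 0 < a + 2*b*t + c*t^2) → 0 ≤ a + 2*b*y + c*y^2 →
      (a + 2*b*y + c*y^2 = 0 → 0 < 2*b + 2*c*y) →
      ∀ t ∈ Set.Ioo y x, 0 < a + b*(t+y) + c*(t*y) := by
    intro a b c hd hq hqy hsl t ht
    rcases eq_or_lt_of_le hqy with h0 | h0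
    · have hb := hsl h0.symm
      have heq : a + b*(t+y) + c*(t*y) = (a + 2*b*y + c*y^2) + ((2*b+2*c*y)/2)*(t-y) := by
        ring
      rw [heq, ← h0, zero_add]
      exact mul_pos (by linarith) (by linarith [ht.1])
    · by_contra hle
      push_neg at hle
      have hcontP : ContinuousOn (fun s => a + b*(s+y) + c*(s*y)) (Set.Icc y t) := by
        fun_prop
      have hyy : a + b*(y+y) + c*(y*y) = a + 2*b*y + c*y^2 := by ring
      have hmem : (0:ℝ) ∈ Set.Icc (a + b*(t+y) + c*(t*y)) (a + b*(y+y) + c*(y*y)) := by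
        constructor
        · exact hle
        · rw [hyy]; exact h0.le
      obtain ⟨s, hs, hP0⟩ := intermediate_value_Icc' ht.1.le hcontP hmem
      have hP0' : a + b*(s+y) + c*(s*y) = 0 := hP0
      rcases eq_or_lt_of_le hs.1 with hsy | hsy
      · rw [← hsy] at hP0'
        nlinarith
      · have hq1s : 0 < a + 2*b*s + c*s^2 := hq s ⟨hsy, lt_of_le_of_lt hs.2 ht.2⟩
        have hps := polar_sq a b c s y
        rw [hP0'] at hps
        nlinarith [mul_pos hq1s h0, mul_nonneg hd (sq_nonneg (s-y))]
  have hP1 : ∀ t ∈ Set.Ioo y x, 0 < f1+g1*(t+y)+h1*(t*y) := by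
    refine hpolar f1 g1 h1 hd1 ?_ ?_ ?_
    · intro t ht; have := hpos1 t ht; rw [hq1def] at this; simpa using this
    · rw [hq1def] at hq1y; simpa using hq1y
    · intro h0
      have : q1 y = 0 := by rw [hq1def]; simpa using h0
      exact (hy1 this).2
  have hP2 : ∀ t ∈ Set.Ioo y x, 0 < f2+g2*(t+y)+h2*(t*y) := by
    refine hpolar f2 g2 h2 hd2 ?_ ?_ ?_
    · intro t ht; have := hpos2 t ht; rw [hq2def] at this; simpa using this
    · rw [hq2def] at hq2y; simpa using hq2y
    · intro h0
      have : q2 y = 0 := by rw [hq2def]; simpa using h0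
      exact (hy2 this).2
  have hWpos : ∀ t ∈ Set.Ioo y x, 0 < W t := by
    intro t ht
    have hq1t := hpos1 t ht
    have hq2t := hpos2 t ht
    have hA : 0 < Real.sqrt (q1 t) := Real.sqrt_pos.mpr hq1t
    have hB : 0 < Real.sqrt (q2 t) := Real.sqrt_pos.mpr hq2t
    have hP1t := hP1 t ht
    have hP2t := hP2 t ht
    simp only [hW]
    rcases eq_or_lt_of_le hq2y with h0 | h0
    · have h2 := hy2 h0.symm
      have hC : 0 < Real.sqrt (q1 y) := Real.sqrt_pos.mpr h2.1
      have hD0 : Real.sqrt (q2 y) = 0 := by rw [← h0, Real.sqrt_zero]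
      simp only [hD0, mul_zero, zero_mul, zero_add]
      positivity
    · have hD : 0 < Real.sqrt (q2 y) := Real.sqrt_pos.mpr h0
      have hC : 0 ≤ Real.sqrt (q1 y) := Real.sqrt_nonneg _
      have t1 : 0 < Real.sqrt (q2 t) * Real.sqrt (q2 y) * (f1+g1*(t+y)+h1*(t*y)) := by
        positivity
      have t2 : 0 ≤ Real.sqrt (q1 t) * Real.sqrt (q1 y) * (f2+g2*(t+y)+h2*(t*y)) := by
        positivity
      linarith
  have hupos : ∀ t ∈ Set.Ioo y x, 0 < u t := by
    intro t ht
    have hq1t := hpos1 t ht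
    have hq2t := hpos2 t ht
    simp only [hu]
    apply div_pos _ (by linarith [ht.1] : (0:ℝ) < t - y)
    rcases eq_or_lt_of_le hq2y with h0 | h0
    · have h2 := hy2 h0.symm
      have : 0 < Real.sqrt (q1 y * q2 t) := Real.sqrt_pos.mpr (mul_pos h2.1 hq2t)
      have := Real.sqrt_nonneg (q1 t * q2 y)
      linarith
    · have : 0 < Real.sqrt (q1 t * q2 y) := Real.sqrt_pos.mpr (mul_pos hq1t h0)
      have := Real.sqrt_nonneg (q1 y * q2 t)
      linarith
  have hderiv : ∀ t ∈ Set.Ioo y x, HasDerivAt φ (φd t) t := by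
    intro t ht
    have hq1t := hpos1 t ht
    have hq2t := hpos2 t ht
    have htne : t - y ≠ 0 := sub_ne_zero.mpr (ne_of_gt ht.1)
    have hA : 0 < Real.sqrt (q1 t) := Real.sqrt_pos.mpr hq1t
    have hB : 0 < Real.sqrt (q2 t) := Real.sqrt_pos.mpr hq2t
    have hs1 : HasDerivAt (fun s => Real.sqrt (q1 s * q2 y))
        ((2*g1+2*h1*t) * Real.sqrt (q2 y) / (2 * Real.sqrt (q1 t))) t := by
      rcases eq_or_lt_of_le hq2y with h0 | h0
      · have hz : (fun s => Real.sqrt (q1 s * q2 y)) = fun _ => 0 := by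
          funext s; rw [← h0, mul_zero, Real.sqrt_zero]
        rw [hz, ← h0, Real.sqrt_zero, mul_zero, zero_div]
        exact hasDerivAt_const t 0
      · have hout := (Real.hasDerivAt_sqrt
          (ne_of_gt (mul_pos hq1t h0))).comp t ((hdq1 t).mul_const (q2 y))
        refine hout.congr_deriv (Eq.symm ?_)
        rw [Real.sqrt_mul hq1t.le]
        have hD : (0:ℝ) < Real.sqrt (q2 y) := Real.sqrt_pos.mpr h0
        field_simp
        linear_combination (g1+h1*t) * (Real.sq_sqrt h0.le : Real.sqrt (q2 y) ^ 2 = f2+2*g2*y+h2*y^2)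
    have hs2 : HasDerivAt (fun s => Real.sqrt (q1 y * q2 s))
        (Real.sqrt (q1 y) * (2*g2+2*h2*t) / (2 * Real.sqrt (q2 t))) t := by
      rcases eq_or_lt_of_le hq1y with h0 | h0
      · have hz : (fun s => Real.sqrt (q1 y * q2 s)) = fun _ => 0 := by
          funext s; rw [← h0, zero_mul, Real.sqrt_zero]
        rw [hz, ← h0, Real.sqrt_zero, zero_mul, zero_div]
        exact hasDerivAt_const t 0
      · have hout := (Real.hasDerivAt_sqrt
          (ne_of_gt (mul_pos h0 hq2t))).comp t ((hdq2 t).const_mul (q1 y))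
        refine hout.congr_deriv (Eq.symm ?_)
        rw [Real.sqrt_mul h0.le]
        have hC : (0:ℝ) < Real.sqrt (q1 y) := Real.sqrt_pos.mpr h0
        field_simp
        linear_combination (g2+h2*t) * (Real.sq_sqrt h0.le : Real.sqrt (q1 y) ^ 2 = f1+2*g1*y+h1*y^2)
    have hden : HasDerivAt (fun s : ℝ => s - y) 1 t := (hasDerivAt_id t).sub_const y
    have hu' : HasDerivAt u
        ((((2*g1+2*h1*t) * Real.sqrt (q2 y) / (2 * Real.sqrt (q1 t))
          + Real.sqrt (q1 y) * (2*g2+2*h2*t) / (2 * Real.sqrt (q2 t))) * (t-y)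
          - (Real.sqrt (q1 t * q2 y) + Real.sqrt (q1 y * q2 t)) * 1) / ((t-y)^2)) t :=
      (hs1.add hs2).div hden htne
    have hφ'' := (hu'.pow 2).sub_const (U^2)
    have hφdef : HasDerivAt φ ((2:ℕ) * u t ^ (2-1) *
        ((((2*g1+2*h1*t) * Real.sqrt (q2 y) / (2 * Real.sqrt (q1 t))
          + Real.sqrt (q1 y) * (2*g2+2*h2*t) / (2 * Real.sqrt (q2 t))) * (t-y)
          - (Real.sqrt (q1 t * q2 y) + Real.sqrt (q1 y * q2 t)) * 1) / ((t-y)^2))) t := hφ''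
    convert hφdef using 1
    simp only [hφd, hW]
    rw [Real.sqrt_mul hq1t.le, Real.sqrt_mul hq1y]
    have hA2 : Real.sqrt (q1 t) ^ 2 = q1 t := Real.sq_sqrt hq1t.le
    have hB2 : Real.sqrt (q2 t) ^ 2 = q2 t := Real.sq_sqrt hq2t.le
    have hq1p : q1 t = f1 + 2*g1*t + h1*t^2 := by rw [hq1def]
    have hq2p : q2 t = f2 + 2*g2*t + h2*t^2 := by rw [hq2def]
    rw [hq1p] at hA2
    rw [hq2p] at hB2
    clear_value u
    field_simp
    linear_combination (2*(u t)*(Real.sqrt (q2 t))*(Real.sqrt (q2 y))) * hA2 + (2*(u t)*(Real.sqrt (q1 t))*(Real.sqrt (q1 y))) * hB2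

  have hφdneg : ∀ t ∈ Set.Ioo y x, φd t < 0 := by
    intro t ht
    have hq1t := hpos1 t ht
    have hq2t := hpos2 t ht
    have hA : 0 < Real.sqrt (q1 t) := Real.sqrt_pos.mpr hq1t
    have hB : 0 < Real.sqrt (q2 t) := Real.sqrt_pos.mpr hq2t
    have h1 : 0 < t - y := by linarith [ht.1]
    simp only [hφd]
    apply mul_neg_of_pos_of_neg
    · have := hupos t ht; linarith
    · apply div_neg_of_neg_of_pos
      · simp only [neg_neg, neg_lt, neg_zero]; exact hWpos t ht
      · positivity
  have hcont : ContinuousOn φ (Set.Ioi y) := by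
    have hnum : Continuous (fun t : ℝ => Real.sqrt (q1 t * q2 y) + Real.sqrt (q1 y * q2 t)) := by
      rw [hq1def, hq2def]; fun_prop
    have hdiv : ContinuousOn u (Set.Ioi y) := by
      rw [hu]
      exact hnum.continuousOn.div (by fun_prop)
        (fun t ht => sub_ne_zero.mpr (ne_of_gt ht))
    rw [hφ]
    exact (hdiv.pow 2).sub continuousOn_const
  have hφx : φ x = 0 := by
    have hux : u x = U := by
      simp only [hu]
      rw [← hU, mul_comm, mul_div_assoc, div_self (sub_ne_zero.mpr (ne_of_gt hxy)), mul_one]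
    simp only [hφ, hux, sub_self]
  have hanti : StrictAntiOn φ (Set.Ioc y x) := by
    apply strictAntiOn_of_deriv_neg (convex_Ioc y x) (hcont.mono (fun t ht => ht.1))
    intro t ht
    rw [interior_Ioc] at ht
    rw [(hderiv t ht).deriv]
    exact hφdneg t ht
  have htop : Tendsto φ (𝓝[>] y) atTop := by
    have hsub : Tendsto (fun t : ℝ => t - y) (𝓝[>] y) (𝓝[>] (0:ℝ)) := by
      apply tendsto_nhdsWithin_of_tendsto_nhds_of_eventually_within
      · have h' : Tendsto (fun t : ℝ => t - y) (𝓝 y) (𝓝 (y - y)) :=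
          (continuous_id.sub continuous_const).tendsto y
        rw [sub_self] at h'
        exact h'.mono_left nhdsWithin_le_nhds
      · filter_upwards [self_mem_nhdsWithin] with t ht
        exact sub_pos.mpr (show y < t from ht)
    have hN : ∀ t : ℝ, q1 t * q2 y + q1 y * q2 t
        = (2*(q1 y*q2 y)) + ((2*g1+2*h1*y)*q2 y + q1 y*(2*g2+2*h2*y))*(t-y)
          + (h1*q2 y + q1 y*h2)*(t-y)^2 := by
      intro t; rw [hq1def, hq2def]; ring
    have heb : 0 < 2*(q1 y*q2 y) ∨ 0 < (2*g1+2*h1*y)*q2 y + q1 y*(2*g2+2*h2*y) := by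
      rcases eq_or_lt_of_le hq1y with h0 | h0
      · right
        have h2 := hy1 h0.symm
        rw [← h0]
        simpa using mul_pos h2.2 h2.1
      rcases eq_or_lt_of_le hq2y with h02 | h02
      · right
        have h2 := hy2 h02.symm
        rw [← h02]
        simpa using mul_pos h2.1 h2.2
      · left; nlinarith [mul_pos h0 h02]
    have hNt := tendsto_aux (2*(q1 y*q2 y))
      ((2*g1+2*h1*y)*q2 y + q1 y*(2*g2+2*h2*y)) (h1*q2 y + q1 y*h2)
      (by nlinarith [mul_nonneg hq1y hq2y]) heb
    have hcomp := hNt.comp hsub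
    apply tendsto_atTop_mono' (𝓝[>] y) _ (tendsto_atTop_add_const_right _ (-U^2) hcomp)
    filter_upwards [Ioo_mem_nhdsGT_of_mem ⟨le_refl y, hxy⟩] with t ht
    have hq1t := hpos1 t ht
    have hq2t := hpos2 t ht
    have hts : 0 < t - y := sub_pos.mpr ht.1
    have hν2 : (q1 t * q2 y + q1 y * q2 t)
        ≤ (Real.sqrt (q1 t*q2 y) + Real.sqrt (q1 y*q2 t))^2 := by
      have e1 : Real.sqrt (q1 t*q2 y)^2 = q1 t*q2 y :=
        Real.sq_sqrt (mul_nonneg hq1t.le hq2y)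
      have e2 : Real.sqrt (q1 y*q2 t)^2 = q1 y*q2 t :=
        Real.sq_sqrt (mul_nonneg hq1y hq2t.le)
      nlinarith [mul_nonneg (Real.sqrt_nonneg (q1 t*q2 y)) (Real.sqrt_nonneg (q1 y*q2 t))]
    simp only [Function.comp_apply, hφ, hu]
    rw [← hN t, div_pow]
    have hdd : (q1 t * q2 y + q1 y * q2 t)/(t-y)^2
        ≤ (Real.sqrt (q1 t*q2 y) + Real.sqrt (q1 y*q2 t))^2/(t-y)^2 :=
      div_le_div_of_nonneg_right hν2 (sq_nonneg (t-y))
    linarith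
  have himage : φ '' (Set.Ioo y x) = Set.Ioi (0:ℝ) := by
    apply Set.Subset.antisymm
    · rintro s ⟨t, ht, rfl⟩
      have h' := hanti ⟨ht.1, ht.2.le⟩ ⟨hxy, le_refl x⟩ ht.2
      rw [hφx] at h'
      exact h'
    · intro s hs
      have hsp : (0:ℝ) < s := hs
      obtain ⟨t0, ht0, hφt0⟩ : ∃ t0, t0 ∈ Set.Ioo y x ∧ s < φ t0 := by
        have h1 := (htop.eventually (eventually_gt_atTop s)).and
          (Ioo_mem_nhdsGT_of_mem ⟨le_refl y, hxy⟩)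
        obtain ⟨t0, h2, h3⟩ := h1.exists
        exact ⟨t0, h3, h2⟩
      have hc : ContinuousOn φ (Set.Icc t0 x) :=
        hcont.mono (fun r hr => lt_of_lt_of_le ht0.1 hr.1)
      have hmem : s ∈ Set.Icc (φ x) (φ t0) := ⟨by rw [hφx]; exact hsp.le, hφt0.le⟩
      obtain ⟨t1, ht1, hft1⟩ := intermediate_value_Icc' ht0.2.le hc hmem
      refine ⟨t1, ⟨lt_of_lt_of_le ht0.1 ht1.1, ?_⟩, hft1⟩
      rcases eq_or_lt_of_le ht1.2 with h | h
      · exfalso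
        have : φ t1 = s := hft1
        rw [h, hφx] at this
        exact absurd this.symm (ne_of_gt hsp)
      · exact h
  have hpt : ∀ t ∈ Set.Ioo y x, |φd t| * G (φ t) = (Real.sqrt (q1 t * q2 t))⁻¹ := by
    intro t ht
    have hq1t := hpos1 t ht
    have hq2t := hpos2 t ht
    have hts : 0 < t - y := sub_pos.mpr ht.1
    have hA : 0 < Real.sqrt (q1 t) := Real.sqrt_pos.mpr hq1t
    have hB : 0 < Real.sqrt (q2 t) := Real.sqrt_pos.mpr hq2t
    have hA2 : Real.sqrt (q1 t)^2 = f1+2*g1*t+h1*t^2 := by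
      rw [Real.sq_sqrt hq1t.le, hq1def]
    have hB2 : Real.sqrt (q2 t)^2 = f2+2*g2*t+h2*t^2 := by
      rw [Real.sq_sqrt hq2t.le, hq2def]
    have hC2 : Real.sqrt (q1 y)^2 = f1+2*g1*y+h1*y^2 := by
      rw [Real.sq_sqrt hq1y, hq1def]
    have hD2 : Real.sqrt (q2 y)^2 = f2+2*g2*y+h2*y^2 := by
      rw [Real.sq_sqrt hq2y, hq2def]
    have hkey := key_identity f1 g1 h1 f2 g2 h2 t y _ _ _ _ hA2 hB2 hC2 hD2
    have hWpt := hWpos t ht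
    have hupt := hupos t ht
    have hV2 : V^2 = 4*((g1^2-f1*h1)*(g2^2-f2*h2)) := by
      rw [hV, mul_pow, Real.sq_sqrt (mul_nonneg hd1 hd2)]; ring
    have hus : u t * (t-y) = Real.sqrt (q1 t)*Real.sqrt (q2 y)
        + Real.sqrt (q1 y)*Real.sqrt (q2 t) := by
      simp only [hu]
      rw [div_mul_cancel₀ _ (ne_of_gt hts), Real.sqrt_mul hq1t.le, Real.sqrt_mul hq1y]
    have hW2 : (W t)^2 = ((u t^2 + T)^2 - V^2) * ((t-y)^2)^2 := by
      rw [hW]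
      rw [show (fun t => 2 * (Real.sqrt (q2 t) * Real.sqrt (q2 y) * (f1+g1*(t+y)+h1*(t*y))
        + Real.sqrt (q1 t) * Real.sqrt (q1 y) * (f2+g2*(t+y)+h2*(t*y)))) t
        = 2 * (Real.sqrt (q2 t) * Real.sqrt (q2 y) * (f1+g1*(t+y)+h1*(t*y))
        + Real.sqrt (q1 t) * Real.sqrt (q1 y) * (f2+g2*(t+y)+h2*(t*y))) from rfl]
      rw [hkey, ← hus, ← hV2, ← hT]
      ring
    have hWu : (0:ℝ) ≤ W t * u t / (t-y)^2 := by positivity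
    have hsqrt : Real.sqrt ((φ t + (U^2+T+V)) * (φ t + (U^2+T-V)) * (φ t + U^2))
        = W t * u t / (t-y)^2 := by
      have e1 : φ t + U^2 = u t^2 := by simp only [hφ]; ring
      have e2 : φ t + (U^2+T+V) = u t^2 + T + V := by simp only [hφ]; ring
      have e3 : φ t + (U^2+T-V) = u t^2 + T - V := by simp only [hφ]; ring
      have hsne : ((t-y)^2)^2 ≠ 0 := by positivity
      have key2 : (W t * u t)^2 = ((u t^2+T+V) * (u t^2+T-V) * (u t^2)) * ((t-y)^2)^2 := by
        linear_combination ((u t)^2) * hW2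
      have h5 : (u t^2+T+V) * (u t^2+T-V) * (u t^2) = (W t*u t/(t-y)^2)^2 := by
        rw [eq_comm, div_pow, div_eq_iff hsne]
        linear_combination key2
      rw [e2, e3, e1, h5, Real.sqrt_sq hWu]
    have habs : |φd t| = u t * W t / (Real.sqrt (q1 t) * Real.sqrt (q2 t) * (t-y)^2) := by
      rw [abs_of_neg (hφdneg t ht)]
      simp only [hφd]
      field_simp
    simp only [hG]
    rw [habs, hsqrt, Real.sqrt_mul hq1t.le]
    rw [inv_eq_one_div, inv_eq_one_div]
    field_simp
  -- assembly
  have hRHS : 2 * RF (U ^ 2 + T + V) (U ^ 2 + T - V) (U ^ 2) = ∫ s in Set.Ioi (0:ℝ), G s := by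
    rw [RF]; ring
  rw [hRHS, ← himage,
    integral_image_eq_integral_abs_deriv_smul measurableSet_Ioo
      (fun t ht => (hderiv t ht).hasDerivWithinAt) (hanti.injOn.mono Set.Ioo_subset_Ioc_self) G,
    intervalIntegral.integral_of_le hxy.le, MeasureTheory.integral_Ioc_eq_integral_Ioo]
  exact MeasureTheory.setIntegral_congr_fun measurableSet_Ioo
    (fun t ht => ((smul_eq_mul _ _).trans (hpt t ht)).symm)
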